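/- arXiv:1111.5903 — 2 statements merged into one kernel-verified Lean document; each statement's English description precedes it below -/
import Mathlib

section
/- Let x(t) = c - ln(t)/ln(2) for some constant c. Then for every t in (0,T], the integral from 0 to t/2 of x(s) ds minus the integral from t/2 to t of x(s) ds equals t. -/
open MeasureTheory Real Set

lemma aux_integrable_log {a : ℝ} (ha : 0 ≤ a) : IntervalIntegrable Real.log volume 0 a := by
  rw [intervalIntegrable_iff_integrableOn_Ioc_of_le ha]
  have hg : IntegrableOn (fun x : ℝ => 2 * x ^ (-(1/2) : ℝ) + x) (Ioc 0 a) volume := by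
    have h1 : IntervalIntegrable (fun x : ℝ => 2 * x ^ (-(1/2) : ℝ) + x) volume 0 a :=
      ((intervalIntegral.intervalIntegrable_rpow' (by norm_num)).const_mul 2).add
        intervalIntegral.intervalIntegrable_id
    rwa [intervalIntegrable_iff_integrableOn_Ioc_of_le ha] at h1
  refine MeasureTheory.Integrable.mono hg Real.measurable_log.aestronglyMeasurable.restrict ?_
  rw [ae_restrict_iff' measurableSet_Ioc]
  filter_upwards with s hs
  have hs0 : 0 < s := hs.1
  have hrpow : 0 < s ^ (-(1/2) : ℝ) := Real.rpow_pos_of_pos hs0 _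
  have hbound : |Real.log s| ≤ 2 * s ^ (-(1/2) : ℝ) + s := by
    rcases abs_cases (Real.log s) with ⟨h1, _⟩ | ⟨h1, _⟩
    · rw [h1]
      have := Real.log_le_sub_one_of_pos hs0
      nlinarith
    · rw [h1]
      have hl : Real.log (s ^ (-(1/2) : ℝ)) ≤ s ^ (-(1/2) : ℝ) - 1 :=
        Real.log_le_sub_one_of_pos hrpow
      rw [Real.log_rpow hs0] at hl
      nlinarith
  calc ‖Real.log s‖ = |Real.log s| := rfl
    _ ≤ 2 * s ^ (-(1/2) : ℝ) + s := hbound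
    _ ≤ ‖2 * s ^ (-(1/2) : ℝ) + s‖ := le_abs_self _

theorem aux_integral_log {a : ℝ} (ha : 0 < a) :
    ∫ s in (0:ℝ)..a, Real.log s = a * Real.log a - a := by
  have h := intervalIntegral.integral_eq_sub_of_hasDerivAt_of_le ha.le
    (f := fun x => x * Real.log x - x) (f' := Real.log)
    ((Real.continuous_mul_log.sub continuous_id).continuousOn)
    (fun s hs => by
      have := Real.hasDerivAt_mul_log (ne_of_gt hs.1)
      simpa using this.fun_sub (hasDerivAt_id s))
    (aux_integrable_log ha.le)
  simpa using h

/-- The function `x(t) = c - ln t / ln 2` solves the Volterra equation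
`∫₀^{t/2} x(s) ds - ∫_{t/2}^t x(s) ds = t` for every `t ∈ (0, T]`. -/
theorem stmt_0 (T c : ℝ) (hT : 0 < T) (x : ℝ → ℝ)
    (hx : ∀ t, x t = c - Real.log t / Real.log 2) :
    ∀ t ∈ Set.Ioc (0 : ℝ) T,
      (∫ s in Set.Ioc (0 : ℝ) (t / 2), x s) - (∫ s in Set.Ioc (t / 2) t, x s) = t := by
  intro t ht
  have ht0 : 0 < t := ht.1
  have ht2 : 0 < t / 2 := by linarith
  have hL : Real.log 2 ≠ 0 := by
    exact ne_of_gt (Real.log_pos (by norm_num))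
  have hxf : x = fun s => c - Real.log s / Real.log 2 := funext hx
  -- convert set integrals to interval integrals
  rw [← intervalIntegral.integral_of_le (by linarith : (0:ℝ) ≤ t/2),
      ← intervalIntegral.integral_of_le (by linarith : t/2 ≤ t), hxf]
  have hint1 : IntervalIntegrable Real.log volume 0 (t/2) := aux_integrable_log ht2.le
  have hint2 : IntervalIntegrable Real.log volume (t/2) t :=
    intervalIntegral.intervalIntegrable_log (notMem_uIcc_of_lt ht2 ht0)
  have e1 : ∫ s in (0:ℝ)..(t/2), (c - Real.log s / Real.log 2)
      = c * (t/2) - (t/2 * Real.log (t/2) - t/2) / Real.log 2 := by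
    rw [intervalIntegral.integral_sub intervalIntegrable_const
        (hint1.div_const _)]
    rw [intervalIntegral.integral_div, aux_integral_log ht2]
    simp [mul_comm]
  have e2 : ∫ s in (t/2)..t, (c - Real.log s / Real.log 2)
      = c * (t/2) - (t * Real.log t - (t/2) * Real.log (t/2) - t + t/2) / Real.log 2 := by
    rw [intervalIntegral.integral_sub intervalIntegrable_const (hint2.div_const _)]
    rw [intervalIntegral.integral_div, integral_log,
        intervalIntegral.integral_const, smul_eq_mul]
    ring
  rw [e1, e2]
  have hlog : Real.log (t/2) = Real.log t - Real.log 2 := Real.log_div (ne_of_gt ht0) (by norm_num)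
  rw [hlog]
  field_simp
  ring
end

section
/- Under conditions A and B, for every natural number j the multiplicity r_j of the root λ = 1 of the j-th equation P_j(λ) = K_n(0,0) + Σ_{i=1}^{n-1} α_i^{1+j}(K_i(0,0) − K_{i+1}(0,0)) λ^{a_i} = 0 satisfies r_j ≤ n − 1. That is, if L(j) = 0 and Σ_{i=1}^{n-1} α_i^{1+j}(K_i(0,0) − K_{i+1}(0,0)) a_i^l = 0 for l = 1,...,n−1, then K_n(0,0) = 0, contradicting K_n(0,0) ≠ 0. -/
/-- Abel/telescoping identity for the sum `L(j)`. -/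
lemma stmt_8_abel (K b : ℕ → ℝ) : ∀ m : ℕ,
    ∑ i ∈ Finset.Icc 1 (m + 1), K i * (b i - b (i - 1)) =
      K (m + 1) * b (m + 1) - K 1 * b 0 +
        ∑ i ∈ Finset.Icc 1 m, (K i - K (i + 1)) * b i := by
  intro m
  induction m with
  | zero => simp; ring
  | succ m ih =>
    rw [Finset.sum_Icc_succ_top (by omega : 1 ≤ m + 1 + 1), ih,
      Finset.sum_Icc_succ_top (by omega : 1 ≤ m + 1)]
    rw [show m + 1 + 1 - 1 = m + 1 from rfl]
    ring

/-- The multiplicity of the root `λ = 1` of the `j`-th characteristic equation is at most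
`n - 1`: if `L(j) = Σ_{i=1}^n Kᵢ(αᵢ^{1+j} - α_{i-1}^{1+j}) = 0` and
`Σ_{i=1}^{n-1} αᵢ^{1+j}(Kᵢ - K_{i+1}) aᵢˡ = 0` for `l = 1,…,n-1` (with `aᵢ = ln αᵢ`),
then `K_n = 0`, contradicting `K_n ≠ 0`. -/
theorem stmt_8 (n : ℕ) (hn : 1 ≤ n) (j : ℕ)
    (α : ℕ → ℝ) (hα0 : α 0 = 0) (hαn : α n = 1)
    (hαmono : ∀ i < n, α i < α (i + 1)) (hαpos : ∀ i ∈ Finset.Icc 1 (n - 1), 0 < α i)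
    (a : ℕ → ℝ) (ha : ∀ i, a i = Real.log (α i))
    (K : ℕ → ℝ) (hKn : K n ≠ 0)
    (hL : ∑ i ∈ Finset.Icc 1 n, K i * (α i ^ (1 + j) - α (i - 1) ^ (1 + j)) = 0)
    (hsys : ∀ l ∈ Finset.Icc 1 (n - 1),
      ∑ i ∈ Finset.Icc 1 (n - 1), α i ^ (1 + j) * (K i - K (i + 1)) * a i ^ l = 0) :
    False := by
  obtain ⟨m, rfl⟩ : ∃ m, n = m + 1 := ⟨n - 1, (Nat.succ_pred_eq_of_pos hn).symm⟩
  simp only [Nat.add_sub_cancel] at hαpos hsys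
  -- strict monotonicity of α on [0, m+1]
  have hmono : ∀ i k, k ≤ m + 1 → i < k → α i < α k := by
    intro i k hk hik
    induction k with
    | zero => omega
    | succ k ih =>
      rcases Nat.lt_succ_iff_lt_or_eq.mp hik with h | h
      · exact lt_trans (ih (by omega) h) (hαmono k (by omega))
      · subst h; exact hαmono i (by omega)
  -- each α i with 1 ≤ i ≤ m is in (0,1)
  have hin : ∀ i, 1 ≤ i → i ≤ m → 0 < α i ∧ α i < 1 := by
    intro i h1 h2
    refine ⟨hαpos i (Finset.mem_Icc.mpr ⟨h1, h2⟩), ?_⟩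
    have := hmono i (m + 1) le_rfl (by omega)
    rwa [hαn] at this
  -- the log values are negative
  have haneg : ∀ i, 1 ≤ i → i ≤ m → a i < 0 := by
    intro i h1 h2
    rw [ha i]
    exact Real.log_neg (hin i h1 h2).1 (hin i h1 h2).2
  -- Vandermonde: coefficients vanish
  set f : Fin m → ℝ := fun i => a (i + 1) with hf
  have hfinj : Function.Injective f := by
    intro i k hik
    by_contra hne
    have key : ∀ p q : Fin m, (p : ℕ) < (q : ℕ) → a (p + 1) < a (q + 1) := by
      intro p q hpq
      rw [ha, ha]
      exact Real.log_lt_log (hin (p + 1) (by omega) (by omega)).1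
        (hmono (p + 1) (q + 1) (by omega) (by omega))
    have hne' : (i : ℕ) ≠ (k : ℕ) := fun h => hne (Fin.ext h)
    rcases Nat.lt_or_ge (i : ℕ) (k : ℕ) with h | h
    · exact absurd hik (ne_of_lt (key i k h))
    · exact absurd hik.symm (ne_of_lt (key k i (by omega)))
  set v : Fin m → ℝ := fun i => α (i + 1) ^ (1 + j) * (K (i + 1) - K (i + 2)) * a (i + 1)
    with hv
  set F : ℕ → ℝ := fun x => α x ^ (1 + j) * (K x - K (x + 1)) * a x with hF
  have hsum : ∀ l : Fin m, (∑ i : Fin m, v i * f i ^ (l : ℕ)) = 0 := by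
    intro l
    have h1 := hsys ((l : ℕ) + 1) (Finset.mem_Icc.mpr ⟨by omega, l.2⟩)
    rw [← Finset.Ico_add_one_right_eq_Icc, Finset.sum_Ico_eq_sum_range,
      show m + 1 - 1 = m from rfl] at h1
    calc ∑ i : Fin m, v i * f i ^ (l : ℕ)
        = ∑ x ∈ Finset.range m,
            (α (1 + x) ^ (1 + j) * (K (1 + x) - K (1 + x + 1)) * a (1 + x) ^ ((l : ℕ) + 1)) := by
          rw [← Fin.sum_univ_eq_sum_range]
          refine Finset.sum_congr rfl fun i _ => ?_
          simp only [hv, hf, show 1 + (i : ℕ) = (i : ℕ) + 1 from by omega, pow_succ]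
          ring
      _ = 0 := h1
  have hv0 : v = 0 := Matrix.eq_zero_of_forall_pow_sum_mul_pow_eq_zero hfinj hsum
  -- each coefficient α_i^{1+j}(K_i - K_{i+1}) vanishes
  have hc : ∀ i ∈ Finset.Icc 1 m, (K i - K (i + 1)) * α i ^ (1 + j) = 0 := by
    intro i hi
    obtain ⟨hi1, hi2⟩ := Finset.mem_Icc.mp hi
    have h0 := congrFun hv0 ⟨i - 1, by omega⟩
    simp only [hv, Pi.zero_apply] at h0
    rw [show i - 1 + 1 = i from by omega, show i - 1 + 2 = i + 1 from by omega] at h0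
    rcases mul_eq_zero.mp h0 with h | h
    · rw [mul_comm]; exact h
    · exact absurd h (ne_of_lt (haneg i hi1 hi2))
  -- telescope L(j)
  rw [stmt_8_abel K (fun i => α i ^ (1 + j)) m] at hL
  simp only [hαn, hα0, one_pow, zero_pow (by omega : 1 + j ≠ 0), mul_one, mul_zero,
    sub_zero] at hL
  rw [Finset.sum_congr rfl hc] at hL
  simp only [Finset.sum_const_zero, add_zero] at hL
  exact hKn hL
end
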